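/- Let V = ℂ³ with basis (e1, e2, e3). Define two Lie algebra structures on V: g = r_{3,1}(ℂ) with brackets [e1,e2] = e2, [e1,e3] = e3 (all other brackets of basis vectors zero), and n = r_3(ℂ) with brackets {e1,e2} = e2, {e1,e3} = e2 + e3 (all other brackets of basis vectors zero). Then the bilinear product on V determined by e1·e3 = −e2 and all other products of basis vectors equal to zero is a post-Lie algebra structure on the pair (g, n). Moreover, the Lie algebras g and n are not isomorphic (both are solvable). -/
import Mathlib
set_option linter.unreachableTactic false
set_option linter.unusedTactic false


noncomputable section

/-- A map `V → V → V` is ℂ-bilinear. -/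
def IsBilin {V : Type*} [AddCommGroup V] [Module ℂ V] (f : V → V → V) : Prop :=
  (∀ (a : ℂ) (x y z : V), f (a • x + y) z = a • f x z + f y z) ∧
  (∀ (a : ℂ) (x y z : V), f x (a • y + z) = a • f x y + f x z)

/-- `f` is a Lie bracket on the complex vector space `V`. -/
def IsLieBracket {V : Type*} [AddCommGroup V] [Module ℂ V] (f : V → V → V) : Prop :=
  IsBilin f ∧ (∀ x, f x x = 0) ∧
  ∀ x y z, f x (f y z) + f y (f z x) + f z (f x y) = 0

/-- `p` is a post-Lie algebra structure on the pair of Lie brackets `(g, n)` on `V`. -/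
def IsPostLieStruct {V : Type*} [AddCommGroup V] [Module ℂ V]
    (g n p : V → V → V) : Prop :=
  IsBilin p ∧
  (∀ x y, p x y - p y x = g x y - n x y) ∧
  (∀ x y z, p (g x y) z = p x (p y z) - p y (p x z)) ∧
  (∀ x y z, p x (n y z) = n (p x y) z + n y (p x z))

/-- The Lie algebras `(V, g)` and `(W, h)` are isomorphic. -/
def LieBracketIso {V W : Type*} [AddCommGroup V] [Module ℂ V] [AddCommGroup W]
    [Module ℂ W] (g : V → V → V) (h : W → W → W) : Prop :=
  ∃ e : V ≃ₗ[ℂ] W, ∀ x y, e (g x y) = h (e x) (e y)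

/-- The bracket of `r_{3,1}(ℂ)` on `ℂ³` in the basis `(e₁, e₂, e₃)`:
`[e₁,e₂] = e₂`, `[e₁,e₃] = e₃`. -/
def r31Bracket (x y : Fin 3 → ℂ) : Fin 3 → ℂ :=
  ![0, x 0 * y 1 - y 0 * x 1, x 0 * y 2 - y 0 * x 2]

/-- The bracket of `r_3(ℂ)` on `ℂ³` in the basis `(e₁, e₂, e₃)`:
`{e₁,e₂} = e₂`, `{e₁,e₃} = e₂ + e₃`. -/
def r3Bracket (x y : Fin 3 → ℂ) : Fin 3 → ℂ :=
  ![0, x 0 * (y 1 + y 2) - y 0 * (x 1 + x 2), x 0 * y 2 - y 0 * x 2]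

/-- The bilinear product determined by `e₁ · e₃ = -e₂`, all other products of basis
vectors zero. -/
def r31r3Product (x y : Fin 3 → ℂ) : Fin 3 → ℂ :=
  ![0, -(x 0 * y 2), 0]

lemma r31_key (a b : Fin 3 → ℂ) :
    r31Bracket a (r31Bracket a b) = a 0 • r31Bracket a b := by
  funext i
  fin_cases i <;>
    simp [r31Bracket, Pi.smul_apply, smul_eq_mul] <;> ring

/-- On `V = ℂ³`, the brackets of `g = r_{3,1}(ℂ)` and `n = r₃(ℂ)`
are Lie brackets, the product given by `e₁ · e₃ = -e₂` (all other products of basis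
vectors zero) is a post-Lie algebra structure on the pair `(g, n)`, and the Lie
algebras `g` and `n` are not isomorphic. -/
theorem postLie_on_r31_r3 :
    IsLieBracket r31Bracket ∧ IsLieBracket r3Bracket ∧
    IsPostLieStruct r31Bracket r3Bracket r31r3Product ∧
    ¬ LieBracketIso r31Bracket r3Bracket := by
  refine ⟨⟨⟨?_, ?_⟩, ?_, ?_⟩, ⟨⟨?_, ?_⟩, ?_, ?_⟩, ⟨⟨?_, ?_⟩, ?_, ?_, ?_⟩, ?_⟩
  · intro a x y z; funext i; fin_cases i <;>
      simp [r31Bracket, Pi.smul_apply, smul_eq_mul] <;> ring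
  · intro a x y z; funext i; fin_cases i <;>
      simp [r31Bracket, Pi.smul_apply, smul_eq_mul] <;> ring
  · intro x; funext i; fin_cases i <;> simp [r31Bracket]
  · intro x y z; funext i; fin_cases i <;>
      simp [r31Bracket] <;> ring
  · intro a x y z; funext i; fin_cases i <;>
      simp [r3Bracket, Pi.smul_apply, smul_eq_mul] <;> ring
  · intro a x y z; funext i; fin_cases i <;>
      simp [r3Bracket, Pi.smul_apply, smul_eq_mul] <;> ring
  · intro x; funext i; fin_cases i <;>
      simp [r3Bracket]
  · intro x y z; funext i; fin_cases i <;>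
      simp [r3Bracket] <;> ring
  · intro a x y z; funext i; fin_cases i <;>
      simp [r31r3Product, Pi.smul_apply, smul_eq_mul] <;> ring
  · intro a x y z; funext i; fin_cases i <;>
      simp [r31r3Product, Pi.smul_apply, smul_eq_mul] <;> ring
  · intro x y; funext i; fin_cases i <;>
      simp [r31r3Product, r31Bracket, r3Bracket] <;> ring
  · intro x y z; funext i; fin_cases i <;>
      simp [r31r3Product, r31Bracket] <;> ring
  · intro x y z; funext i; fin_cases i <;>
      simp [r31r3Product, r3Bracket] <;> ring
  · rintro ⟨e, he⟩
    set x : Fin 3 → ℂ := e.symm ![1, 0, 0] with hx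
    set y : Fin 3 → ℂ := e.symm ![0, 0, 1] with hy
    have hex : e x = ![1, 0, 0] := e.apply_symm_apply _
    have hey : e y = ![0, 0, 1] := e.apply_symm_apply _
    have h1 : e (r31Bracket x (r31Bracket x y)) =
        r3Bracket ![(1:ℂ), 0, 0] (r3Bracket ![1, 0, 0] ![0, 0, 1]) := by
      rw [he, he, hex, hey]
    have h2 : e (r31Bracket x (r31Bracket x y)) =
        x 0 • r3Bracket ![(1:ℂ), 0, 0] ![0, 0, 1] := by
      rw [r31_key, map_smul, he, hex, hey]
    rw [h1] at h2
    have c1 := congrFun h2 1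
    have c2 := congrFun h2 2
    simp [r3Bracket, Pi.smul_apply, smul_eq_mul] at c1 c2
    rw [← c2] at c1; norm_num at c1
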